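/- arXiv:2306.16075 — 2 statements merged into one kernel-verified Lean document; each statement's English description precedes it below -/
import Mathlib

section
/- Let T* and C be random variables that are conditionally independent given a random vector Z, let T = min(T*, C) and δ = 1{T* ≤ C}. Let G(t|z) = P(C ≤ t | Z = z) and fix τ with 1 - G(τ|Z) > 0 almost surely. For any bounded measurable function f : ℝ≥0 × ℝ^d → ℝ, defining the IPCW weight w = 1{T ≤ τ}·δ/(1 - G(T⁻|Z)) + 1{T > τ}/(1 - G(τ|Z)), one has E[f(min(T,τ), Z) · w] = E[f(min(T*,τ), Z)]. -/
open MeasureTheory ProbabilityTheory Filter Set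

open MeasureTheory ProbabilityTheory Filter Set

lemma measurable_beta_Iio (β : Measure ℝ) : Measurable fun t => (β (Set.Iio t)).toReal := by
  refine Measurable.ennreal_toReal (Monotone.measurable ?_)
  intro a b hab
  exact measure_mono (Set.Iio_subset_Iio hab)

lemma ipcw_key (α β : Measure ℝ) [IsProbabilityMeasure α] [IsProbabilityMeasure β]
    (τ : ℝ) (hβ : β (Set.Iic τ) < 1) (g : ℝ → ℝ) (hg : Measurable g)
    (M : ℝ) (hbdd : ∀ t, |g t| ≤ M) :
    Integrable (fun p : ℝ × ℝ => g (min (min p.1 p.2) τ) *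
        ((if min p.1 p.2 ≤ τ then (if p.1 ≤ p.2 then (1:ℝ) else 0) /
            (1 - (β (Set.Iio (min p.1 p.2))).toReal) else 0) +
         (if τ < min p.1 p.2 then 1 / (1 - (β (Set.Iic τ)).toReal) else 0))) (α.prod β) ∧
    (∫ p : ℝ × ℝ, g (min (min p.1 p.2) τ) *
        ((if min p.1 p.2 ≤ τ then (if p.1 ≤ p.2 then (1:ℝ) else 0) /
            (1 - (β (Set.Iio (min p.1 p.2))).toReal) else 0) +
         (if τ < min p.1 p.2 then 1 / (1 - (β (Set.Iic τ)).toReal) else 0)) ∂(α.prod β))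
      = ∫ t, g (min t τ) ∂α := by
  -- basic positivity facts
  have huniv : β Set.univ = 1 := measure_univ
  have hIoi : β (Set.Ioi τ) = 1 - β (Set.Iic τ) := by
    rw [← Set.compl_Iic, measure_compl measurableSet_Iic (measure_ne_top β _), huniv]
  set b : ℝ := (β (Set.Ioi τ)).toReal with hb_def
  have hβτ_ne : β (Set.Iic τ) ≠ ⊤ := measure_ne_top β _
  have hb_eq : b = 1 - (β (Set.Iic τ)).toReal := by
    rw [hb_def, hIoi, ENNReal.toReal_sub_of_le hβ.le ENNReal.one_ne_top, ENNReal.toReal_one]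
  have hb_pos : 0 < b := by
    rw [hb_eq]
    have : (β (Set.Iic τ)).toReal < 1 := by
      rw [← ENNReal.toReal_one]
      exact ENNReal.toReal_strict_mono ENNReal.one_ne_top hβ
    linarith
  -- for t ≤ τ
  have h1 : ∀ t : ℝ, 1 - (β (Set.Iio t)).toReal = (β (Set.Ici t)).toReal := by
    intro t
    have : β (Set.Ici t) = 1 - β (Set.Iio t) := by
      rw [← Set.compl_Iio, measure_compl measurableSet_Iio (measure_ne_top β _), huniv]
    rw [this, ENNReal.toReal_sub_of_le (measure_mono (Set.subset_univ _) |>.trans huniv.le)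
      ENNReal.one_ne_top, ENNReal.toReal_one]
  have h2 : ∀ t : ℝ, t ≤ τ → b ≤ (β (Set.Ici t)).toReal := by
    intro t ht
    exact ENNReal.toReal_mono (measure_ne_top β _)
      (measure_mono (fun x hx => lt_of_le_of_lt ht hx |>.le))
  -- define the two summands
  set A : ℝ × ℝ → ℝ := fun p =>
    if p.1 ≤ p.2 ∧ p.1 ≤ τ then g p.1 * (1 - (β (Set.Iio p.1)).toReal)⁻¹ else 0 with hA_def
  set B : ℝ × ℝ → ℝ := fun p =>
    if τ < p.1 ∧ τ < p.2 then g τ * (1 - (β (Set.Iic τ)).toReal)⁻¹ else 0 with hB_def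
  have hpt : ∀ p : ℝ × ℝ, g (min (min p.1 p.2) τ) *
        ((if min p.1 p.2 ≤ τ then (if p.1 ≤ p.2 then (1:ℝ) else 0) /
            (1 - (β (Set.Iio (min p.1 p.2))).toReal) else 0) +
         (if τ < min p.1 p.2 then 1 / (1 - (β (Set.Iic τ)).toReal) else 0)) = A p + B p := by
    rintro ⟨t, c⟩
    simp only [hA_def, hB_def]
    rcases le_or_gt t c with htc | htc
    · rw [min_eq_left htc]
      rcases le_or_gt t τ with htτ | htτ
      · simp only [if_pos htτ, if_pos htc, if_neg (not_lt.mpr htτ),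
          if_pos (⟨htc, htτ⟩ : t ≤ c ∧ t ≤ τ),
          if_neg (fun h : τ < t ∧ τ < c => absurd h.1 (not_lt.mpr htτ)),
          min_eq_left htτ]
        ring
      · simp only [if_neg (not_le.mpr htτ), if_pos htτ,
          if_neg (fun h : t ≤ c ∧ t ≤ τ => absurd h.2 (not_le.mpr htτ)),
          if_pos (⟨htτ, htτ.trans_le htc⟩ : τ < t ∧ τ < c), min_eq_right htτ.le]
        ring
    · rw [min_eq_right htc.le]
      rcases le_or_gt c τ with hcτ | hcτ
      · simp only [if_pos hcτ, if_neg (not_le.mpr htc), if_neg (not_lt.mpr hcτ),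
          if_neg (fun h : t ≤ c ∧ t ≤ τ => absurd h.1 (not_le.mpr htc)),
          if_neg (fun h : τ < t ∧ τ < c => absurd h.2 (not_lt.mpr hcτ))]
        ring
      · simp only [if_neg (not_le.mpr hcτ), if_pos hcτ,
          if_neg (fun h : t ≤ c ∧ t ≤ τ => absurd h.1 (not_le.mpr htc)),
          if_pos (⟨hcτ.trans htc, hcτ⟩ : τ < t ∧ τ < c), min_eq_right hcτ.le]
        ring
  -- measurability
  have hβIio : Measurable fun t : ℝ => (β (Set.Iio t)).toReal := measurable_beta_Iio β
  have hA_meas : Measurable A := by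
    refine Measurable.ite ?_ ?_ measurable_const
    · exact (measurableSet_le measurable_fst measurable_snd).inter
        (measurableSet_le measurable_fst measurable_const)
    · exact ((hg.comp measurable_fst).mul
        ((measurable_const.sub (hβIio.comp measurable_fst)).inv))
  have hB_meas : Measurable B := by
    refine Measurable.ite ?_ measurable_const measurable_const
    exact (measurableSet_lt measurable_const measurable_fst).inter
      (measurableSet_lt measurable_const measurable_snd)
  -- bounds
  have hA_bdd : ∀ p, |A p| ≤ M * b⁻¹ := by
    rintro ⟨t, c⟩
    simp only [hA_def]
    split_ifs with h
    · rw [abs_mul]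
      have h1t := h1 t
      have h2t := h2 t h.2
      have hpos : (0:ℝ) < (β (Set.Ici t)).toReal := lt_of_lt_of_le hb_pos h2t
      rw [h1t, abs_of_nonneg (inv_nonneg.mpr hpos.le)]
      have hM : 0 ≤ M := le_trans (abs_nonneg _) (hbdd t)
      exact mul_le_mul (hbdd t) (inv_anti₀ hb_pos h2t) (inv_nonneg.mpr hpos.le) hM
    · have hM : 0 ≤ M := le_trans (abs_nonneg _) (hbdd 0)
      simp [abs_nonneg]
      positivity
  have hB_bdd : ∀ p, |B p| ≤ M * b⁻¹ := by
    rintro ⟨t, c⟩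
    simp only [hB_def]
    have hM : 0 ≤ M := le_trans (abs_nonneg _) (hbdd 0)
    split_ifs with h
    · rw [abs_mul, ← hb_eq, abs_of_nonneg (inv_nonneg.mpr hb_pos.le)]
      exact mul_le_mul_of_nonneg_right (hbdd τ) (inv_nonneg.mpr hb_pos.le)
    · simp
      positivity
  have hA_int : Integrable A (α.prod β) := by
    refine (integrable_const (M * b⁻¹)).mono' hA_meas.aestronglyMeasurable ?_
    filter_upwards with p using (by simpa using hA_bdd p)
  have hB_int : Integrable B (α.prod β) := by
    refine (integrable_const (M * b⁻¹)).mono' hB_meas.aestronglyMeasurable ?_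
    filter_upwards with p using (by simpa using hB_bdd p)
  -- compute ∫ A
  have hA_val : (∫ p, A p ∂(α.prod β)) = ∫ t, (if t ≤ τ then g t else 0) ∂α := by
    rw [MeasureTheory.integral_prod _ hA_int]
    refine integral_congr_ae (Filter.Eventually.of_forall fun t => ?_)
    rcases le_or_gt t τ with htτ | htτ
    · have : ∀ c : ℝ, A (t, c) = Set.indicator (Set.Ici t)
          (fun _ => g t * (1 - (β (Set.Iio t)).toReal)⁻¹) c := by
        intro c
        simp only [hA_def, Set.indicator_apply, Set.mem_Ici]
        by_cases hc : t ≤ c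
        · simp [hc, htτ]
        · simp [hc]
      simp_rw [this]
      rw [integral_indicator_const _ measurableSet_Ici, if_pos htτ, smul_eq_mul, measureReal_def, h1 t]
      have hpos : (0:ℝ) < (β (Set.Ici t)).toReal := lt_of_lt_of_le hb_pos (h2 t htτ)
      field_simp
    · have : ∀ c : ℝ, A (t, c) = 0 := by
        intro c
        simp only [hA_def]
        exact if_neg (fun h => absurd h.2 (not_le.mpr htτ))
      simp_rw [this]
      rw [if_neg (not_le.mpr htτ), integral_zero]
  -- compute ∫ B
  have hB_val : (∫ p, B p ∂(α.prod β)) = ∫ t, (if τ < t then g τ else 0) ∂α := by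
    have hBind : B = Set.indicator (Set.Ioi τ ×ˢ Set.Ioi τ)
        (fun _ => g τ * (1 - (β (Set.Iic τ)).toReal)⁻¹) := by
      funext p
      simp only [hB_def, Set.indicator_apply, Set.mem_prod, Set.mem_Ioi]
    rw [hBind, integral_indicator_const _ (measurableSet_Ioi.prod measurableSet_Ioi),
      smul_eq_mul, measureReal_def, Measure.prod_prod]
    have hto : ((α (Set.Ioi τ)) * (β (Set.Ioi τ))).toReal
        = (α (Set.Ioi τ)).toReal * b := ENNReal.toReal_mul
    rw [hto]
    have : ∀ t : ℝ, (if τ < t then g τ else 0)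
        = Set.indicator (Set.Ioi τ) (fun _ => g τ) t := by
      intro t; simp [Set.indicator_apply]
    simp_rw [this]
    rw [integral_indicator_const _ measurableSet_Ioi, smul_eq_mul, measureReal_def, ← hb_eq]
    field_simp
  have h_int : Integrable (fun p : ℝ × ℝ => g (min (min p.1 p.2) τ) *
        ((if min p.1 p.2 ≤ τ then (if p.1 ≤ p.2 then (1:ℝ) else 0) /
            (1 - (β (Set.Iio (min p.1 p.2))).toReal) else 0) +
         (if τ < min p.1 p.2 then 1 / (1 - (β (Set.Iic τ)).toReal) else 0))) (α.prod β) := by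
    have heq : (fun p : ℝ × ℝ => g (min (min p.1 p.2) τ) *
        ((if min p.1 p.2 ≤ τ then (if p.1 ≤ p.2 then (1:ℝ) else 0) /
            (1 - (β (Set.Iio (min p.1 p.2))).toReal) else 0) +
         (if τ < min p.1 p.2 then 1 / (1 - (β (Set.Iic τ)).toReal) else 0)))
        = fun p => A p + B p := funext hpt
    rw [heq]
    exact hA_int.add hB_int
  refine ⟨h_int, ?_⟩
  -- put together
  calc (∫ p : ℝ × ℝ, g (min (min p.1 p.2) τ) *
        ((if min p.1 p.2 ≤ τ then (if p.1 ≤ p.2 then (1:ℝ) else 0) /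
            (1 - (β (Set.Iio (min p.1 p.2))).toReal) else 0) +
         (if τ < min p.1 p.2 then 1 / (1 - (β (Set.Iic τ)).toReal) else 0)) ∂(α.prod β))
      = ∫ p, (A p + B p) ∂(α.prod β) := by
        exact integral_congr_ae (Filter.Eventually.of_forall hpt)
    _ = (∫ p, A p ∂(α.prod β)) + ∫ p, B p ∂(α.prod β) := integral_add hA_int hB_int
    _ = (∫ t, (if t ≤ τ then g t else 0) ∂α) + ∫ t, (if τ < t then g τ else 0) ∂α := by
        rw [hA_val, hB_val]
    _ = ∫ t, ((if t ≤ τ then g t else 0) + (if τ < t then g τ else 0)) ∂α := by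
        rw [← integral_add]
        · refine (integrable_const M).mono' ?_ ?_
          · exact ((hg.ite (measurableSet_le measurable_id measurable_const)
              measurable_const)).aestronglyMeasurable
          · filter_upwards with t
            simp only [Real.norm_eq_abs]
            split_ifs
            · exact hbdd t
            · simpa using le_trans (abs_nonneg _) (hbdd 0)
        · refine (integrable_const M).mono' ?_ ?_
          · exact ((measurable_const.ite (measurableSet_lt measurable_const measurable_id)
              measurable_const)).aestronglyMeasurable
          · filter_upwards with t
            simp only [Real.norm_eq_abs]
            split_ifs
            · exact hbdd τ
            · simpa using le_trans (abs_nonneg _) (hbdd 0)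
    _ = ∫ t, g (min t τ) ∂α := by
        refine integral_congr_ae (Filter.Eventually.of_forall fun t => ?_)
        rcases le_or_gt t τ with htτ | htτ
        · simp [htτ, not_lt.mpr htτ, min_eq_left htτ]
        · simp [not_le.mpr htτ, htτ, min_eq_right htτ.le]


open MeasureTheory ProbabilityTheory Filter Set

/-- Identify a left limit of the cdf with the measure of `Iio`. -/
lemma gm_eq_of_tendsto (βm : Measure (ℝ × ℝ)) [IsProbabilityMeasure βm] (Gfun : ℝ → ℝ)
    (hq : ∀ q : ℚ, Gfun q = (βm {p : ℝ × ℝ | p.2 ≤ (q : ℝ)}).toReal) (t L : ℝ)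
    (hL : Tendsto Gfun (nhdsWithin t (Set.Iio t)) (nhds L)) :
    L = (βm {p : ℝ × ℝ | p.2 < t}).toReal := by
  obtain ⟨u, hu_mono, hu_lt, hu_tendsto⟩ := exists_seq_strictMono_tendsto t
  have hqn : ∀ n : ℕ, ∃ q : ℚ, u n < (q : ℝ) ∧ (q : ℝ) < u (n + 1) := fun n =>
    exists_rat_btwn (hu_mono (Nat.lt_succ_self n))
  choose q hq1 hq2 using hqn
  have hq_lt : ∀ n, (q n : ℝ) < t := fun n => (hq2 n).trans (hu_lt (n + 1))
  have hsm : StrictMono fun n => (q n : ℝ) :=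
    strictMono_nat_of_lt_succ fun n => (hq2 n).trans (hq1 (n + 1))
  have hq_tendsto : Tendsto (fun n => (q n : ℝ)) atTop (nhds t) :=
    tendsto_of_tendsto_of_tendsto_of_le_of_le
      hu_tendsto (hu_tendsto.comp (tendsto_add_atTop_nat 1))
      (fun n => (hq1 n).le) (fun n => (hq2 n).le)
  have h_seq : Tendsto (fun n => Gfun (q n)) atTop (nhds L) := by
    refine hL.comp ?_
    rw [tendsto_nhdsWithin_iff]
    exact ⟨hq_tendsto, Filter.Eventually.of_forall fun n => hq_lt n⟩
  have hmono : Monotone fun n => {p : ℝ × ℝ | p.2 ≤ (q n : ℝ)} :=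
    fun a b hab p hp => le_trans hp (hsm.monotone hab)
  have hU : (⋃ n, {p : ℝ × ℝ | p.2 ≤ (q n : ℝ)}) = {p : ℝ × ℝ | p.2 < t} := by
    ext p
    simp only [Set.mem_iUnion, Set.mem_setOf_eq]
    constructor
    · rintro ⟨n, hn⟩; exact lt_of_le_of_lt hn (hq_lt n)
    · intro hp
      exact ((tendsto_order.1 hq_tendsto).1 _ hp).exists.imp fun n hn => hn.le
  have h_seq2 : Tendsto (fun n => (βm {p : ℝ × ℝ | p.2 ≤ (q n : ℝ)}).toReal) atTop
      (nhds ((βm {p : ℝ × ℝ | p.2 < t}).toReal)) := by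
    have := tendsto_measure_iUnion_atTop (μ := βm) hmono
    rw [hU] at this
    exact (ENNReal.tendsto_toReal (measure_ne_top βm _)).comp this
  have : (fun n => Gfun (q n)) = fun n => (βm {p : ℝ × ℝ | p.2 ≤ (q n : ℝ)}).toReal :=
    funext fun n => hq (q n)
  rw [this] at h_seq
  exact tendsto_nhds_unique h_seq h_seq2

/-- A probability measure on `ℝ × ℝ` that factorizes on rational rectangles is the product of
its marginals. -/
lemma eq_prod_of_rect (ρ0 : Measure (ℝ × ℝ)) [IsProbabilityMeasure ρ0]
    (h : ∀ q r : ℚ, ρ0 (Set.Iic (q : ℝ) ×ˢ Set.Iic (r : ℝ))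
      = ρ0 (Set.Iic (q : ℝ) ×ˢ Set.univ) * ρ0 (Set.univ ×ˢ Set.Iic (r : ℝ))) :
    ρ0 = (ρ0.map Prod.fst).prod (ρ0.map Prod.snd) := by
  have hspan : IsCountablySpanning (⋃ a : ℚ, {Set.Iic (a : ℝ)}) := by
    refine ⟨fun n => Set.Iic ((n : ℚ) : ℝ), fun n => Set.mem_iUnion.mpr ⟨n, rfl⟩, ?_⟩
    ext x
    simp only [Set.mem_iUnion, Set.mem_Iic, Set.mem_univ, iff_true]
    obtain ⟨n, hn⟩ := exists_nat_ge x
    exact ⟨n, by exact_mod_cast hn⟩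
  have hgen : (inferInstance : MeasurableSpace (ℝ × ℝ)) =
      MeasurableSpace.generateFrom
        (Set.image2 (· ×ˢ ·) (⋃ a : ℚ, {Set.Iic (a : ℝ)}) (⋃ a : ℚ, {Set.Iic (a : ℝ)})) := by
    conv_lhs => rw [show (inferInstance : MeasurableSpace (ℝ × ℝ)) =
      @Prod.instMeasurableSpace ℝ ℝ (borel ℝ) (borel ℝ) by
        rw [← BorelSpace.measurable_eq (α := ℝ)]]
    rw [Real.borel_eq_generateFrom_Iic_rat]
    exact generateFrom_prod_eq hspan hspan
  have hpi : IsPiSystem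
      (Set.image2 (· ×ˢ ·) (⋃ a : ℚ, {Set.Iic (a : ℝ)}) (⋃ a : ℚ, {Set.Iic (a : ℝ)})) :=
    Real.isPiSystem_Iic_rat.prod Real.isPiSystem_Iic_rat
  haveI : IsProbabilityMeasure (ρ0.map Prod.fst) :=
    Measure.isProbabilityMeasure_map measurable_fst.aemeasurable
  haveI : IsProbabilityMeasure (ρ0.map Prod.snd) :=
    Measure.isProbabilityMeasure_map measurable_snd.aemeasurable
  refine MeasureTheory.ext_of_generate_finite _ hgen hpi ?_ ?_
  · rintro s ⟨s1, hs1, s2, hs2, rfl⟩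
    simp only [Set.mem_iUnion, Set.mem_singleton_iff] at hs1 hs2
    obtain ⟨a, rfl⟩ := hs1
    obtain ⟨b, rfl⟩ := hs2
    rw [Measure.prod_prod, Measure.map_apply measurable_fst measurableSet_Iic,
      Measure.map_apply measurable_snd measurableSet_Iic, ← Set.prod_univ, ← Set.univ_prod]
    exact h a b
  · simp

/-- **IPCW unbiasedness identity.**
If `T*` and `C` are conditionally independent given `Z`, `T = min(T*, C)`,
`δ = 1{T* ≤ C}`, `G(t|z)` is the conditional cdf of `C` given `Z = z`
(with `Gm t z` its left limit at `t`), and `1 - G(τ|Z) > 0` a.s., then for any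
bounded measurable `f`, the IPCW weight
`w = 1{T ≤ τ} δ/(1 - G(T⁻|Z)) + 1{T > τ}/(1 - G(τ|Z))` satisfies
`E[f(min(T,τ), Z) w] = E[f(min(T*,τ), Z)]`. -/
theorem ipcw_unbiased
    {Ω : Type*} [mΩ : MeasurableSpace Ω] [StandardBorelSpace Ω]
    (μ : Measure Ω) [IsProbabilityMeasure μ]
    {d : ℕ} (Tstar C : Ω → ℝ) (Z : Ω → (Fin d → ℝ))
    (hT : Measurable Tstar) (hC : Measurable C) (hZ : Measurable Z)
    (hmZ : MeasurableSpace.comap Z inferInstance ≤ mΩ)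
    (hindep : CondIndepFun (MeasurableSpace.comap Z inferInstance) hmZ Tstar C μ)
    (G Gm : ℝ → (Fin d → ℝ) → ℝ)
    (hG : ∀ t : ℝ, (fun ω => G t (Z ω)) =ᵐ[μ]
      μ[Set.indicator {ω | C ω ≤ t} (fun _ => (1 : ℝ)) |
        MeasurableSpace.comap Z inferInstance])
    (hGm : ∀ (t : ℝ) (z : Fin d → ℝ),
      Tendsto (fun s => G s z) (nhdsWithin t (Set.Iio t)) (nhds (Gm t z)))
    (τ : ℝ) (hτpos : 0 < τ)
    (hGτ : ∀ᵐ ω ∂μ, G τ (Z ω) < 1)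
    (f : ℝ × (Fin d → ℝ) → ℝ) (hf : Measurable f)
    (M : ℝ) (hfbdd : ∀ p, |f p| ≤ M) :
    (∫ ω, f (min (min (Tstar ω) (C ω)) τ, Z ω) *
        ((if min (Tstar ω) (C ω) ≤ τ then
            (if Tstar ω ≤ C ω then (1 : ℝ) else 0) /
              (1 - Gm (min (Tstar ω) (C ω)) (Z ω))
          else 0) +
          (if τ < min (Tstar ω) (C ω) then 1 / (1 - G τ (Z ω)) else 0)) ∂μ)
      = ∫ ω, f (min (Tstar ω) τ, Z ω) ∂μ := by
  classical
  set Y : Ω → ℝ × ℝ := fun ω => (Tstar ω, C ω) with hY_def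
  have hY : Measurable Y := hT.prodMk hC
  set ρ : Kernel (Fin d → ℝ) (ℝ × ℝ) := condDistrib Y Z μ with hρ_def
  set ν : Measure (Fin d → ℝ) := μ.map Z with hν_def
  haveI : IsProbabilityMeasure ν := Measure.isProbabilityMeasure_map hZ.aemeasurable
  -- disintegration
  have hdis : μ.map (fun ω => (Z ω, Y ω)) = ν ⊗ₘ ρ := by
    have h1 : (μ.map fun ω => (Z ω, Y ω)).fst = ν := Measure.fst_map_prodMk hY
    rw [hρ_def, condDistrib, ← h1, Measure.disintegrate]
  -- identification of G with the kernel cdf, a.e.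
  have hGq : ∀ t : ℝ, (fun ω => G t (Z ω)) =ᵐ[μ]
      fun ω => (ρ (Z ω) {p : ℝ × ℝ | p.2 ≤ t}).toReal := by
    intro t
    have hs : MeasurableSet {p : ℝ × ℝ | p.2 ≤ t} := measurableSet_le measurable_snd measurable_const
    have h2 := condDistrib_ae_eq_condExp (μ := μ) hZ hY hs
    have hpre : Y ⁻¹' {p : ℝ × ℝ | p.2 ≤ t} = {ω | C ω ≤ t} := rfl
    rw [hpre] at h2
    exact (hG t).trans h2.symm
  -- rectangle factorization a.e.
  have hrect : ∀ q r : ℚ, ∀ᵐ ω ∂μ,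
      (ρ (Z ω) (Set.Iic (q : ℝ) ×ˢ Set.Iic (r : ℝ))).toReal
        = (ρ (Z ω) (Set.Iic (q : ℝ) ×ˢ Set.univ)).toReal
          * (ρ (Z ω) (Set.univ ×ˢ Set.Iic (r : ℝ))).toReal := by
    intro q r
    have hsq : MeasurableSet (Set.Iic (q : ℝ)) := measurableSet_Iic
    have hsr : MeasurableSet (Set.Iic (r : ℝ)) := measurableSet_Iic
    have hcd1 := condDistrib_ae_eq_condExp (μ := μ) hZ hY (hsq.prod hsr)
    have hcd2 := condDistrib_ae_eq_condExp (μ := μ) hZ hY (hsq.prod MeasurableSet.univ)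
    have hcd3 := condDistrib_ae_eq_condExp (μ := μ) hZ hY (MeasurableSet.univ.prod hsr)
    have hpre1 : Y ⁻¹' (Set.Iic (q : ℝ) ×ˢ Set.Iic (r : ℝ))
        = Tstar ⁻¹' Set.Iic (q : ℝ) ∩ C ⁻¹' Set.Iic (r : ℝ) := by
      rw [hY_def, Set.mk_preimage_prod]
    have hpre2 : Y ⁻¹' (Set.Iic (q : ℝ) ×ˢ (Set.univ : Set ℝ)) = Tstar ⁻¹' Set.Iic (q : ℝ) := by
      rw [hY_def, Set.mk_preimage_prod, Set.preimage_univ, Set.inter_univ]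
    have hpre3 : Y ⁻¹' ((Set.univ : Set ℝ) ×ˢ Set.Iic (r : ℝ)) = C ⁻¹' Set.Iic (r : ℝ) := by
      rw [hY_def, Set.mk_preimage_prod, Set.preimage_univ, Set.univ_inter]
    rw [hpre1] at hcd1
    rw [hpre2] at hcd2
    rw [hpre3] at hcd3
    have hmul := (condIndepFun_iff_condExp_inter_preimage_eq_mul (m' := MeasurableSpace.comap Z inferInstance) (hm' := hmZ)
      (μ := μ) hT hC).mp hindep (Set.Iic (q : ℝ)) (Set.Iic (r : ℝ)) hsq hsr
    filter_upwards [hcd1, hcd2, hcd3, hmul] with ω h1 h2 h3 h4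
    simp only [measureReal_def] at h1 h2 h3
    rw [h1, h2, h3]; exact h4
  -- a.e. identification of Gm with the kernel's left cdf
  have hGm_ae : ∀ᵐ ω ∂μ, ∀ t : ℝ, Gm t (Z ω) = (ρ (Z ω) {p : ℝ × ℝ | p.2 < t}).toReal := by
    have hall : ∀ᵐ ω ∂μ, ∀ q : ℚ,
        G (q : ℝ) (Z ω) = (ρ (Z ω) {p : ℝ × ℝ | p.2 ≤ (q : ℝ)}).toReal :=
      ae_all_iff.mpr fun q => hGq (q : ℝ)
    filter_upwards [hall] with ω hω t
    exact gm_eq_of_tendsto (ρ (Z ω)) (fun s => G s (Z ω)) hω t (Gm t (Z ω)) (hGm t (Z ω))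
  have hGτ_ae : ∀ᵐ ω ∂μ, ρ (Z ω) {p : ℝ × ℝ | p.2 ≤ τ} < 1 := by
    filter_upwards [hGτ, hGq τ] with ω h1 h2
    rw [h2] at h1
    exact (ENNReal.toReal_lt_toReal (measure_ne_top _ _) ENNReal.one_ne_top).mp
      (by simpa using h1)
  -- transfer the a.e. statements to the law of Z
  have hτle : MeasurableSet {p : ℝ × ℝ | p.2 ≤ τ} :=
    measurableSet_le measurable_snd measurable_const
  have h_ae_z : ∀ᵐ z ∂ν, (ρ z = ((ρ z).map Prod.fst).prod ((ρ z).map Prod.snd)) ∧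
      ρ z {p : ℝ × ℝ | p.2 ≤ τ} < 1 := by
    have hrect_z : ∀ᵐ z ∂ν, ∀ q r : ℚ,
        (ρ z (Set.Iic (q : ℝ) ×ˢ Set.Iic (r : ℝ))).toReal
          = (ρ z (Set.Iic (q : ℝ) ×ˢ Set.univ)).toReal
            * (ρ z (Set.univ ×ˢ Set.Iic (r : ℝ))).toReal := by
      rw [hν_def]
      refine (ae_map_iff hZ.aemeasurable ?_).mpr
        (ae_all_iff.mpr fun q => ae_all_iff.mpr fun r => hrect q r)
      have heq : {z : Fin d → ℝ | ∀ q r : ℚ,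
          (ρ z (Set.Iic (q : ℝ) ×ˢ Set.Iic (r : ℝ))).toReal
            = (ρ z (Set.Iic (q : ℝ) ×ˢ Set.univ)).toReal
              * (ρ z (Set.univ ×ˢ Set.Iic (r : ℝ))).toReal}
          = ⋂ (q : ℚ) (r : ℚ), {z | (ρ z (Set.Iic (q : ℝ) ×ˢ Set.Iic (r : ℝ))).toReal
            = (ρ z (Set.Iic (q : ℝ) ×ˢ Set.univ)).toReal
              * (ρ z (Set.univ ×ˢ Set.Iic (r : ℝ))).toReal} := by
        ext z; simp [Set.mem_iInter]
      rw [heq]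
      refine MeasurableSet.iInter fun q => MeasurableSet.iInter fun r => ?_
      exact measurableSet_eq_fun
        (Kernel.measurable_coe ρ (measurableSet_Iic.prod measurableSet_Iic)).ennreal_toReal
        (((Kernel.measurable_coe ρ (measurableSet_Iic.prod MeasurableSet.univ)).ennreal_toReal).mul
          ((Kernel.measurable_coe ρ (MeasurableSet.univ.prod measurableSet_Iic)).ennreal_toReal))
    have hτ_z : ∀ᵐ z ∂ν, ρ z {p : ℝ × ℝ | p.2 ≤ τ} < 1 := by
      rw [hν_def]
      refine (ae_map_iff hZ.aemeasurable ?_).mpr hGτ_ae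
      exact measurableSet_lt (Kernel.measurable_coe ρ hτle) measurable_const
    filter_upwards [hrect_z, hτ_z] with z h1 h2
    refine ⟨eq_prod_of_rect (ρ z) fun q r => ?_, h2⟩
    have h5 : ((ρ z (Set.Iic (q : ℝ) ×ˢ Set.univ))
        * (ρ z (Set.univ ×ˢ Set.Iic (r : ℝ)))).toReal
        = (ρ z (Set.Iic (q : ℝ) ×ˢ Set.univ)).toReal
          * (ρ z (Set.univ ×ˢ Set.Iic (r : ℝ))).toReal := ENNReal.toReal_mul
    refine (ENNReal.toReal_eq_toReal_iff' (measure_ne_top _ _) ?_).mp (by rw [h1 q r, ← h5])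
    exact ENNReal.mul_ne_top (measure_ne_top _ _) (measure_ne_top _ _)
  -- marginal rewriting
  have hsnd : ∀ (z : Fin d → ℝ) (t : ℝ),
      ρ z {p : ℝ × ℝ | p.2 < t} = ((ρ z).map Prod.snd) (Set.Iio t) := by
    intro z t
    rw [Measure.map_apply measurable_snd measurableSet_Iio]
    rfl
  have hsnd2 : ∀ z : Fin d → ℝ,
      ρ z {p : ℝ × ℝ | p.2 ≤ τ} = ((ρ z).map Prod.snd) (Set.Iic τ) := by
    intro z
    rw [Measure.map_apply measurable_snd measurableSet_Iic]
    rfl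
  -- the integrand as a function on the product space
  set F : (Fin d → ℝ) × (ℝ × ℝ) → ℝ := fun x =>
    f (min (min x.2.1 x.2.2) τ, x.1) *
      ((if min x.2.1 x.2.2 ≤ τ then (if x.2.1 ≤ x.2.2 then (1 : ℝ) else 0) /
          (1 - (ρ x.1 {p : ℝ × ℝ | p.2 < min x.2.1 x.2.2}).toReal) else 0) +
       (if τ < min x.2.1 x.2.2 then 1 / (1 - (ρ x.1 {p : ℝ × ℝ | p.2 ≤ τ}).toReal) else 0))
    with hF_def
  have hker : Measurable fun x : (Fin d → ℝ) × (ℝ × ℝ) =>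
      ρ x.1 {p : ℝ × ℝ | p.2 < min x.2.1 x.2.2} := by
    have hs : MeasurableSet {y : ((Fin d → ℝ) × (ℝ × ℝ)) × (ℝ × ℝ) |
        y.2.2 < min y.1.2.1 y.1.2.2} :=
      measurableSet_lt (measurable_snd.snd)
        ((measurable_fst.snd.fst).min (measurable_fst.snd.snd))
    have h := Kernel.measurable_kernel_prodMk_left
      (κ := ρ.comap (Prod.fst : (Fin d → ℝ) × (ℝ × ℝ) → Fin d → ℝ) measurable_fst) hs
    simpa [Kernel.comap_apply, Set.preimage, Set.mem_setOf_eq] using h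
  have hρτ_meas : Measurable fun z : Fin d → ℝ => (ρ z {p : ℝ × ℝ | p.2 ≤ τ}).toReal :=
    (Kernel.measurable_coe ρ hτle).ennreal_toReal
  have hF_meas : Measurable F := by
    rw [hF_def]
    refine Measurable.mul ?_ (Measurable.add ?_ ?_)
    · exact hf.comp (((measurable_fst.comp measurable_snd).min
        (measurable_snd.comp measurable_snd)).min measurable_const |>.prodMk measurable_fst)
    · refine Measurable.ite ?_ ?_ measurable_const
      · exact measurableSet_le ((measurable_fst.comp measurable_snd).min
          (measurable_snd.comp measurable_snd)) measurable_const
      · refine Measurable.div ?_ ?_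
        · refine Measurable.ite ?_ measurable_const measurable_const
          exact measurableSet_le (measurable_fst.comp measurable_snd)
            (measurable_snd.comp measurable_snd)
        · exact measurable_const.sub hker.ennreal_toReal
    · refine Measurable.ite ?_ ?_ measurable_const
      · exact measurableSet_lt measurable_const ((measurable_fst.comp measurable_snd).min
          (measurable_snd.comp measurable_snd))
      · exact measurable_const.div (measurable_const.sub (hρτ_meas.comp measurable_fst))
  -- at a good z, rewrite F (z, ·) in terms of the marginal β
  have hFz : ∀ z : Fin d → ℝ, (fun p => F (z, p)) = fun p : ℝ × ℝ =>
      f (min (min p.1 p.2) τ, z) *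
        ((if min p.1 p.2 ≤ τ then (if p.1 ≤ p.2 then (1 : ℝ) else 0) /
            (1 - (((ρ z).map Prod.snd) (Set.Iio (min p.1 p.2))).toReal) else 0) +
         (if τ < min p.1 p.2 then 1 /
            (1 - (((ρ z).map Prod.snd) (Set.Iic τ)).toReal) else 0)) := by
    intro z
    funext p
    rw [hF_def]
    simp only
    rw [hsnd z, hsnd2 z]
  -- inner integrals and integrability at good z
  have hstep : ∀ᵐ z ∂ν, Integrable (fun p => F (z, p)) (ρ z) ∧
      (∫ p, ‖F (z, p)‖ ∂(ρ z)) ≤ M ∧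
      (∫ p, F (z, p) ∂(ρ z)) = ∫ p : ℝ × ℝ, f (min p.1 τ, z) ∂(ρ z) := by
    filter_upwards [h_ae_z] with z hz
    obtain ⟨hprod, hτz⟩ := hz
    haveI : IsProbabilityMeasure ((ρ z).map (Prod.fst : ℝ × ℝ → ℝ)) :=
      Measure.isProbabilityMeasure_map measurable_fst.aemeasurable
    haveI : IsProbabilityMeasure ((ρ z).map (Prod.snd : ℝ × ℝ → ℝ)) :=
      Measure.isProbabilityMeasure_map measurable_snd.aemeasurable
    have hβτ : ((ρ z).map Prod.snd) (Set.Iic τ) < 1 := by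
      rw [← hsnd2 z]; exact hτz
    have hgz : Measurable fun t : ℝ => f (t, z) :=
      hf.comp (measurable_id.prodMk measurable_const)
    obtain ⟨hint, hval⟩ := ipcw_key ((ρ z).map Prod.fst) ((ρ z).map Prod.snd) τ hβτ
      (fun t => f (t, z)) hgz M (fun t => hfbdd (t, z))
    obtain ⟨hint2, hval2⟩ := ipcw_key ((ρ z).map Prod.fst) ((ρ z).map Prod.snd) τ hβτ
      (fun t => |f (t, z)|) hgz.abs M (fun t => by simpa [abs_abs] using hfbdd (t, z))
    rw [← hprod] at hint hval hval2
    have hI : Integrable (fun p => F (z, p)) (ρ z) := by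
      rw [hFz z]; exact hint
    refine ⟨hI, ?_, ?_⟩
    · -- bound on the integral of the norm
      have hWnn : ∀ p : ℝ × ℝ, (0 : ℝ) ≤
          ((if min p.1 p.2 ≤ τ then (if p.1 ≤ p.2 then (1 : ℝ) else 0) /
              (1 - (((ρ z).map Prod.snd) (Set.Iio (min p.1 p.2))).toReal) else 0) +
           (if τ < min p.1 p.2 then 1 /
              (1 - (((ρ z).map Prod.snd) (Set.Iic τ)).toReal) else 0)) := by
        intro p
        have h1 : ∀ s : Set ℝ, (((ρ z).map Prod.snd) s).toReal ≤ 1 := by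
          intro s
          rw [← ENNReal.toReal_one]
          exact ENNReal.toReal_mono ENNReal.one_ne_top prob_le_one
        refine add_nonneg ?_ ?_ <;> split_ifs <;>
          first
          | positivity
          | exact div_nonneg (by positivity) (by linarith [h1 (Set.Iio (min p.1 p.2))])
          | exact div_nonneg (by positivity) (by linarith [h1 (Set.Iic τ)])
      have hnorm_eq : (fun p : ℝ × ℝ => ‖F (z, p)‖) = fun p : ℝ × ℝ =>
          |f (min (min p.1 p.2) τ, z)| *
            ((if min p.1 p.2 ≤ τ then (if p.1 ≤ p.2 then (1 : ℝ) else 0) /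
                (1 - (((ρ z).map Prod.snd) (Set.Iio (min p.1 p.2))).toReal) else 0) +
             (if τ < min p.1 p.2 then 1 /
                (1 - (((ρ z).map Prod.snd) (Set.Iic τ)).toReal) else 0)) := by
        have := hFz z
        funext p
        rw [Real.norm_eq_abs, congrFun this p, abs_mul, abs_of_nonneg (hWnn p)]
      calc (∫ p, ‖F (z, p)‖ ∂(ρ z))
          = ∫ p : ℝ × ℝ, |f (min (min p.1 p.2) τ, z)| *
            ((if min p.1 p.2 ≤ τ then (if p.1 ≤ p.2 then (1 : ℝ) else 0) /
                (1 - (((ρ z).map Prod.snd) (Set.Iio (min p.1 p.2))).toReal) else 0) +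
             (if τ < min p.1 p.2 then 1 /
                (1 - (((ρ z).map Prod.snd) (Set.Iic τ)).toReal) else 0))
            ∂(ρ z) := by rw [hnorm_eq]
        _ = ∫ t, |f (min t τ, z)| ∂((ρ z).map Prod.fst) := hval2
        _ ≤ M := by
          have hint3 : Integrable (fun t => |f (min t τ, z)|) ((ρ z).map Prod.fst) := by
            refine (integrable_const M).mono' ?_ ?_
            · exact (hgz.comp (measurable_id.min measurable_const)).abs.aestronglyMeasurable
            · filter_upwards with t
              rw [Real.norm_eq_abs, abs_abs]
              exact hfbdd _
          calc (∫ t, |f (min t τ, z)| ∂((ρ z).map Prod.fst))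
              ≤ ∫ _t, M ∂((ρ z).map Prod.fst) :=
                integral_mono hint3 (integrable_const M) fun t => hfbdd _
            _ = M := by simp
    · -- value of the inner integral
      calc (∫ p, F (z, p) ∂(ρ z))
          = ∫ t, f (min t τ, z) ∂((ρ z).map Prod.fst) := by
            rw [hFz z]; exact hval
        _ = ∫ p : ℝ × ℝ, f (min p.1 τ, z) ∂(ρ z) :=
            integral_map (f := fun t : ℝ => f (min t τ, z)) measurable_fst.aemeasurable
              ((hf.comp ((measurable_id.min measurable_const).prodMk
                measurable_const)).aestronglyMeasurable)
  -- integrability of F over the product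
  have hF_int : Integrable F (ν ⊗ₘ ρ) := by
    rw [Measure.integrable_compProd_iff hF_meas.aestronglyMeasurable]
    constructor
    · filter_upwards [hstep] with z h using h.1
    · refine (integrable_const M).mono' ?_ ?_
      · exact (hF_meas.norm.stronglyMeasurable.integral_kernel_prod_right'
          (κ := ρ)).aestronglyMeasurable
      · filter_upwards [hstep] with z h
        rw [Real.norm_eq_abs, abs_of_nonneg (integral_nonneg fun p => norm_nonneg _)]
        exact h.2.1
  -- the right-hand side function
  set F2 : (Fin d → ℝ) × (ℝ × ℝ) → ℝ := fun x => f (min x.2.1 τ, x.1) with hF2_def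
  have hF2_meas : Measurable F2 := by
    rw [hF2_def]
    exact hf.comp (((measurable_fst.comp measurable_snd).min measurable_const).prodMk
      measurable_fst)
  have hF2_int : Integrable F2 (ν ⊗ₘ ρ) := by
    refine (integrable_const M).mono' hF2_meas.aestronglyMeasurable ?_
    filter_upwards with x
    rw [Real.norm_eq_abs]
    exact hfbdd _
  -- final chain
  calc (∫ ω, f (min (min (Tstar ω) (C ω)) τ, Z ω) *
        ((if min (Tstar ω) (C ω) ≤ τ then
            (if Tstar ω ≤ C ω then (1 : ℝ) else 0) /
              (1 - Gm (min (Tstar ω) (C ω)) (Z ω))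
          else 0) +
          (if τ < min (Tstar ω) (C ω) then 1 / (1 - G τ (Z ω)) else 0)) ∂μ)
      = ∫ ω, F (Z ω, Y ω) ∂μ := by
        refine integral_congr_ae ?_
        filter_upwards [hGm_ae, hGq τ] with ω h1 h2
        rw [hF_def]
        simp only
        rw [h1 (min (Tstar ω) (C ω)), h2]
    _ = ∫ x, F x ∂(μ.map fun ω => (Z ω, Y ω)) :=
        (integral_map (hZ.prodMk hY).aemeasurable hF_meas.aestronglyMeasurable).symm
    _ = ∫ x, F x ∂(ν ⊗ₘ ρ) := by rw [hdis]
    _ = ∫ z, ∫ p, F (z, p) ∂(ρ z) ∂ν := Measure.integral_compProd hF_int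
    _ = ∫ z, ∫ p, F2 (z, p) ∂(ρ z) ∂ν := by
        refine integral_congr_ae ?_
        filter_upwards [hstep] with z h
        rw [h.2.2]
    _ = ∫ x, F2 x ∂(ν ⊗ₘ ρ) := (Measure.integral_compProd hF2_int).symm
    _ = ∫ x, F2 x ∂(μ.map fun ω => (Z ω, Y ω)) := by rw [hdis]
    _ = ∫ ω, F2 (Z ω, Y ω) ∂μ :=
        integral_map (hZ.prodMk hY).aemeasurable hF2_meas.aestronglyMeasurable
    _ = ∫ ω, f (min (Tstar ω) τ, Z ω) ∂μ := rfl
end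

section
/- Under conditional independence of T* and C given Z, the IPCW weight w = 1{T ≤ τ}·δ/(1 - G(T⁻|Z)) + 1{T > τ}/(1 - G(τ|Z)) satisfies E[w] = 1. -/
open MeasureTheory ProbabilityTheory Filter Set
open scoped ENNReal

/-- A strictly monotone rational sequence increasing to `t`. -/
lemma ipcw_rat_seq (t : ℝ) : ∃ q : ℕ → ℚ, StrictMono (fun n => (q n : ℝ))
    ∧ (∀ n, (q n : ℝ) < t) ∧ Tendsto (fun n => (q n : ℝ)) atTop (nhds t)
    ∧ (⋃ n, Iic ((q n : ℝ))) = Iio t := by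
  obtain ⟨u, hu, hu_lt, hu_t⟩ := exists_seq_strictMono_tendsto t
  choose q hq1 hq2 using fun n => exists_rat_btwn (hu (Nat.lt_succ_self n))
  have hmono : StrictMono (fun n => (q n : ℝ)) :=
    strictMono_nat_of_lt_succ fun n => (hq2 n).trans (hq1 (n + 1))
  have hlt : ∀ n, (q n : ℝ) < t := fun n => (hq2 n).trans (hu_lt (n + 1))
  have ht : Tendsto (fun n => (q n : ℝ)) atTop (nhds t) := by
    refine tendsto_of_tendsto_of_tendsto_of_le_of_le hu_t
      (hu_t.comp (tendsto_add_atTop_nat 1)) (fun n => (hq1 n).le) (fun n => (hq2 n).le)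
  refine ⟨q, hmono, hlt, ht, ?_⟩
  ext x
  simp only [mem_iUnion, mem_Iic, mem_Iio]
  constructor
  · rintro ⟨n, hn⟩
    exact lt_of_le_of_lt hn (hlt n)
  · intro hx
    obtain ⟨n, hn⟩ := (ht.eventually (eventually_gt_nhds hx)).exists
    exact ⟨n, hn.le⟩

/-- measure of `univ ×ˢ s` equals the second marginal. -/
lemma ipcw_snd_apply (m : Measure (ℝ × ℝ)) {s : Set ℝ} (hs : MeasurableSet s) :
    m (univ ×ˢ s) = m.snd s := by
  rw [Measure.snd_apply hs]
  congr 1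
  ext p
  simp

lemma ipcw_fst_apply (m : Measure (ℝ × ℝ)) {s : Set ℝ} (hs : MeasurableSet s) :
    m (s ×ˢ univ) = m.fst s := by
  rw [Measure.fst_apply hs]
  congr 1
  ext p
  simp

/-- Joint measurability of `(a, t) ↦ κ a (univ ×ˢ Iio t)`. -/
lemma ipcw_meas_Iio {α : Type*} [MeasurableSpace α] (κ : ProbabilityTheory.Kernel α (ℝ × ℝ)) :
    Measurable (fun q : α × ℝ => κ q.1 (univ ×ˢ Iio q.2)) := by
  have hrep : ∀ (a : α) (t : ℝ), κ a (univ ×ˢ Iio t)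
      = ⨆ n : ℚ, if (n : ℝ) < t then κ a (univ ×ˢ Iic (n : ℝ)) else 0 := by
    intro a t
    obtain ⟨q, hmono, hlt, ht, hU⟩ := ipcw_rat_seq t
    have hU2 : (univ ×ˢ Iio t : Set (ℝ × ℝ)) = ⋃ n : ℕ, univ ×ˢ Iic ((q n : ℝ)) := by
      rw [← hU, prod_iUnion]
    have hdir : Directed (· ⊆ ·) (fun n : ℕ => (univ ×ˢ Iic ((q n : ℝ)) : Set (ℝ × ℝ))) := by
      refine Monotone.directed_le fun i j hij => ?_
      exact prod_mono subset_rfl (Iic_subset_Iic.2 (hmono.monotone hij))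
    rw [hU2, Directed.measure_iUnion hdir]
    refine le_antisymm (iSup_le fun n => ?_) (iSup_le fun m => ?_)
    · refine le_iSup_of_le (q n) ?_
      rw [if_pos (hlt n)]
    · by_cases hm : (m : ℝ) < t
      · rw [if_pos hm]
        obtain ⟨n, hn⟩ := (ht.eventually (eventually_gt_nhds hm)).exists
        refine le_iSup_of_le n (measure_mono (prod_mono subset_rfl (Iic_subset_Iic.2 hn.le)))
      · rw [if_neg hm]
        exact zero_le
  have heq : (fun q : α × ℝ => κ q.1 (univ ×ˢ Iio q.2))
      = fun q : α × ℝ => ⨆ n : ℚ, if (n : ℝ) < q.2 then κ q.1 (univ ×ˢ Iic (n : ℝ)) else 0 := by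
    ext q; exact hrep q.1 q.2
  rw [heq]
  refine Measurable.iSup fun n => Measurable.ite ?_ ?_ measurable_const
  · exact measurable_snd measurableSet_Ioi
  · exact (κ.measurable_coe (MeasurableSet.univ.prod measurableSet_Iic)).comp measurable_fst

/-- A probability measure on `ℝ × ℝ` which factorizes on rational rectangles is the product of
its marginals. -/
lemma ipcw_prod_fact (m : Measure (ℝ × ℝ)) [IsProbabilityMeasure m]
    (h : ∀ q r : ℚ, m (Iio (q : ℝ) ×ˢ Iio (r : ℝ))
      = m (Iio (q : ℝ) ×ˢ univ) * m (univ ×ˢ Iio (r : ℝ))) :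
    m = m.fst.prod m.snd := by
  have hspan : IsCountablySpanning (⋃ a : ℚ, {Iio (a : ℝ)}) := by
    refine ⟨fun n => Iio ((n : ℚ) : ℝ), fun n => mem_iUnion.2 ⟨(n : ℚ), rfl⟩,
      eq_univ_of_forall fun x => ?_⟩
    obtain ⟨n, hn⟩ := exists_nat_gt x
    exact mem_iUnion.2 ⟨n, mem_Iio.2 (by exact_mod_cast hn)⟩
  have hgen : (inferInstance : MeasurableSpace (ℝ × ℝ)) = MeasurableSpace.generateFrom
      (image2 (· ×ˢ ·) (⋃ a : ℚ, {Iio (a : ℝ)}) (⋃ a : ℚ, {Iio (a : ℝ)})) := by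
    have hR : (inferInstance : MeasurableSpace ℝ)
        = MeasurableSpace.generateFrom (⋃ a : ℚ, {Iio (a : ℝ)}) := by
      rw [← Real.borel_eq_generateFrom_Iio_rat]
      exact BorelSpace.measurable_eq
    calc (inferInstance : MeasurableSpace (ℝ × ℝ))
        = @Prod.instMeasurableSpace ℝ ℝ
            (MeasurableSpace.generateFrom (⋃ a : ℚ, {Iio (a : ℝ)}))
            (MeasurableSpace.generateFrom (⋃ a : ℚ, {Iio (a : ℝ)})) := by rw [← hR]
      _ = _ := generateFrom_prod_eq hspan hspan
  refine ext_of_generate_finite _ hgen (IsPiSystem.prod Real.isPiSystem_Iio_rat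
    Real.isPiSystem_Iio_rat) ?_ (by simp)
  rintro s hs
  rw [mem_image2] at hs
  obtain ⟨u, hu, v, hv, rfl⟩ := hs
  simp only [mem_iUnion, mem_singleton_iff] at hu hv
  obtain ⟨q, rfl⟩ := hu
  obtain ⟨r, rfl⟩ := hv
  rw [Measure.prod_prod, ← ipcw_fst_apply m measurableSet_Iio,
    ← ipcw_snd_apply m measurableSet_Iio, h q r]

/-- The pure Fubini computation for the IPCW weight. -/
lemma ipcw_lintegral (τ : ℝ) (α β : Measure ℝ) [IsProbabilityMeasure α] [IsProbabilityMeasure β]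
    (hmeas : Measurable fun t : ℝ => β (Iio t)) (hβ : β (Iic τ) < 1) :
    ∫⁻ p : ℝ × ℝ, ((if p.1 ≤ p.2 ∧ p.1 ≤ τ then (1 - β (Iio p.1))⁻¹ else 0)
      + (if τ < p.1 ∧ τ < p.2 then (1 - β (Iic τ))⁻¹ else 0)) ∂(α.prod β) = 1 := by
  have hBA : ∀ t : ℝ, t ≤ τ → β (Iio t) < 1 :=
    fun t ht => lt_of_le_of_lt (measure_mono fun x hx => le_trans (le_of_lt hx) ht) hβ
  have hs1 : MeasurableSet {p : ℝ × ℝ | p.1 ≤ p.2 ∧ p.1 ≤ τ} := by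
    refine MeasurableSet.inter ?_ ?_
    · exact measurableSet_le measurable_fst measurable_snd
    · exact measurable_fst measurableSet_Iic
  have hm1 : Measurable fun p : ℝ × ℝ =>
      (if p.1 ≤ p.2 ∧ p.1 ≤ τ then (1 - β (Iio p.1))⁻¹ else 0) := by
    refine Measurable.ite hs1 ?_ measurable_const
    exact (Measurable.sub measurable_const (hmeas.comp measurable_fst)).inv
  rw [lintegral_add_left hm1]
  have hterm1 : ∫⁻ p : ℝ × ℝ, (if p.1 ≤ p.2 ∧ p.1 ≤ τ then (1 - β (Iio p.1))⁻¹ else 0)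
      ∂(α.prod β) = α (Iic τ) := by
    rw [lintegral_prod _ hm1.aemeasurable]
    have hinner : ∀ t : ℝ, ∫⁻ c, (if t ≤ c ∧ t ≤ τ then (1 - β (Iio t))⁻¹ else 0) ∂β
        = Set.indicator (Iic τ) (fun _ => (1 : ℝ≥0∞)) t := by
      intro t
      by_cases ht : t ≤ τ
      · have h0 : (1 : ℝ≥0∞) - β (Iio t) ≠ 0 := by
          rw [Ne, tsub_eq_zero_iff_le]
          exact not_le.2 (hBA t ht)
        have hne : (1 : ℝ≥0∞) - β (Iio t) ≠ ⊤ :=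
          ne_top_of_le_ne_top ENNReal.one_ne_top tsub_le_self
        have hie : (fun c => (if t ≤ c ∧ t ≤ τ then (1 - β (Iio t))⁻¹ else 0))
            = Set.indicator (Ici t) (fun _ => (1 - β (Iio t))⁻¹) := by
          ext c
          simp [Set.indicator_apply, mem_Ici, ht]
        rw [hie, lintegral_indicator_const measurableSet_Ici]
        have hIci : β (Ici t) = 1 - β (Iio t) := by
          rw [← compl_Iio, measure_compl measurableSet_Iio (measure_ne_top _ _), measure_univ]
        rw [hIci, ENNReal.inv_mul_cancel h0 hne, Set.indicator_of_mem (mem_Iic.2 ht)]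
      · simp [ht, Set.indicator_of_notMem (fun hx => ht (mem_Iic.1 hx))]
    exact (lintegral_congr hinner).trans
      (by rw [lintegral_indicator_const measurableSet_Iic, one_mul])
  have hterm2 : ∫⁻ p : ℝ × ℝ, (if τ < p.1 ∧ τ < p.2 then (1 - β (Iic τ))⁻¹ else 0)
      ∂(α.prod β) = α (Ioi τ) := by
    have h0 : (1 : ℝ≥0∞) - β (Iic τ) ≠ 0 := by
      rw [Ne, tsub_eq_zero_iff_le]
      exact not_le.2 hβ
    have hne : (1 : ℝ≥0∞) - β (Iic τ) ≠ ⊤ :=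
      ne_top_of_le_ne_top ENNReal.one_ne_top tsub_le_self
    have hie : (fun p : ℝ × ℝ => (if τ < p.1 ∧ τ < p.2 then (1 - β (Iic τ))⁻¹ else 0))
        = Set.indicator (Ioi τ ×ˢ Ioi τ) (fun _ => (1 - β (Iic τ))⁻¹) := by
      ext p
      simp [Set.indicator_apply, Set.mem_prod, mem_Ioi]
    rw [hie, lintegral_indicator_const (measurableSet_Ioi.prod measurableSet_Ioi),
      Measure.prod_prod]
    have hIoi : β (Ioi τ) = 1 - β (Iic τ) := by
      rw [← compl_Iic, measure_compl measurableSet_Iic (measure_ne_top _ _), measure_univ]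
    rw [hIoi, mul_comm (α (Ioi τ)), ← mul_assoc, ENNReal.inv_mul_cancel h0 hne, one_mul]
  rw [hterm1, hterm2, ← measure_union (Iic_disjoint_Ioi le_rfl) measurableSet_Ioi,
    Iic_union_Ioi, measure_univ]
/-- **The IPCW weight has expectation 1.**
Under conditional independence of `T*` and `C` given `Z`, the weight
`w = 1{T ≤ τ} δ/(1 - G(T⁻|Z)) + 1{T > τ}/(1 - G(τ|Z))` satisfies `E[w] = 1`. -/
theorem ipcw_weight_mean_one
    {Ω : Type*} [mΩ : MeasurableSpace Ω] [StandardBorelSpace Ω]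
    (μ : Measure Ω) [IsProbabilityMeasure μ]
    {d : ℕ} (Tstar C : Ω → ℝ) (Z : Ω → (Fin d → ℝ))
    (hT : Measurable Tstar) (hC : Measurable C) (hZ : Measurable Z)
    (hmZ : MeasurableSpace.comap Z inferInstance ≤ mΩ)
    (hindep : CondIndepFun (MeasurableSpace.comap Z inferInstance) hmZ Tstar C μ)
    (G Gm : ℝ → (Fin d → ℝ) → ℝ)
    (hG : ∀ t : ℝ, (fun ω => G t (Z ω)) =ᵐ[μ]
      μ[Set.indicator {ω | C ω ≤ t} (fun _ => (1 : ℝ)) |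
        MeasurableSpace.comap Z inferInstance])
    (hGm : ∀ (t : ℝ) (z : Fin d → ℝ),
      Tendsto (fun s => G s z) (nhdsWithin t (Set.Iio t)) (nhds (Gm t z)))
    (τ : ℝ) (hτpos : 0 < τ)
    (hGτ : ∀ᵐ ω ∂μ, G τ (Z ω) < 1) :
    (∫ ω, ((if min (Tstar ω) (C ω) ≤ τ then
            (if Tstar ω ≤ C ω then (1 : ℝ) else 0) /
              (1 - Gm (min (Tstar ω) (C ω)) (Z ω))
          else 0) +
          (if τ < min (Tstar ω) (C ω) then 1 / (1 - G τ (Z ω)) else 0)) ∂μ) = 1 := by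
  classical
  set W : Ω → ℝ × ℝ := fun ω => (Tstar ω, C ω) with hWdef
  have hWm : Measurable W := hT.prodMk hC
  set κ : ProbabilityTheory.Kernel (Fin d → ℝ) (ℝ × ℝ) := condDistrib W Z μ with hκdef
  -- rational CDF identification
  have hι : ∀ q : ℚ, ∀ᵐ ω ∂μ, G (q : ℝ) (Z ω) = (κ (Z ω) (univ ×ˢ Iic (q : ℝ))).toReal := by
    intro q
    have h2 := condDistrib_ae_eq_condExp (μ := μ) hZ hWm
      (MeasurableSet.univ.prod (measurableSet_Iic : MeasurableSet (Iic (q : ℝ))))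
    have hset : W ⁻¹' (univ ×ˢ Iic (q : ℝ)) = {ω | C ω ≤ (q : ℝ)} := by
      ext ω; simp [hWdef]
    rw [hset] at h2
    filter_upwards [hG (q : ℝ), h2] with ω e1 e2
    exact e1.trans e2.symm
  have hτ1 : ∀ᵐ ω ∂μ, G τ (Z ω) = (κ (Z ω) (univ ×ˢ Iic τ)).toReal := by
    have h2 := condDistrib_ae_eq_condExp (μ := μ) hZ hWm
      (MeasurableSet.univ.prod (measurableSet_Iic : MeasurableSet (Iic τ)))
    have hset : W ⁻¹' (univ ×ˢ Iic τ) = {ω | C ω ≤ τ} := by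
      ext ω; simp [hWdef]
    rw [hset] at h2
    filter_upwards [hG τ, h2] with ω e1 e2
    exact e1.trans e2.symm
  -- conditional independence, transferred to the kernel
  have hfact : ∀ q r : ℚ, ∀ᵐ ω ∂μ, κ (Z ω) (Iio (q : ℝ) ×ˢ Iio (r : ℝ))
      = κ (Z ω) (Iio (q : ℝ) ×ˢ univ) * κ (Z ω) (univ ×ˢ Iio (r : ℝ)) := by
    intro q r
    have h0 := ((condIndepFun_iff_condExp_inter_preimage_eq_mul (hm' := hmZ) hT hC).mp hindep)
      (Iio (q : ℝ)) (Iio (r : ℝ)) measurableSet_Iio measurableSet_Iio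
    have h1 := condDistrib_ae_eq_condExp (μ := μ) hZ hWm
      ((measurableSet_Iio).prod measurableSet_Iio :
        MeasurableSet (Iio (q : ℝ) ×ˢ Iio (r : ℝ)))
    have h2 := condDistrib_ae_eq_condExp (μ := μ) hZ hWm
      ((measurableSet_Iio).prod MeasurableSet.univ :
        MeasurableSet (Iio (q : ℝ) ×ˢ (univ : Set ℝ)))
    have h3 := condDistrib_ae_eq_condExp (μ := μ) hZ hWm
      (MeasurableSet.univ.prod measurableSet_Iio :
        MeasurableSet ((univ : Set ℝ) ×ˢ Iio (r : ℝ)))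
    have hs1 : W ⁻¹' (Iio (q : ℝ) ×ˢ Iio (r : ℝ))
        = Tstar ⁻¹' Iio (q : ℝ) ∩ C ⁻¹' Iio (r : ℝ) := by
      ext ω; simp [hWdef]
    have hs2 : W ⁻¹' (Iio (q : ℝ) ×ˢ (univ : Set ℝ)) = Tstar ⁻¹' Iio (q : ℝ) := by
      ext ω; simp [hWdef]
    have hs3 : W ⁻¹' ((univ : Set ℝ) ×ˢ Iio (r : ℝ)) = C ⁻¹' Iio (r : ℝ) := by
      ext ω; simp [hWdef]
    rw [hs1] at h1
    rw [hs2] at h2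
    rw [hs3] at h3
    filter_upwards [h0, h1, h2, h3] with ω e0 e1 e2 e3
    have hr : (κ (Z ω) (Iio (q : ℝ) ×ˢ Iio (r : ℝ))).toReal
        = (κ (Z ω) (Iio (q : ℝ) ×ˢ univ) * κ (Z ω) (univ ×ˢ Iio (r : ℝ))).toReal := by
      rw [ENNReal.toReal_mul, ← measureReal_def, ← measureReal_def, ← measureReal_def, hκdef,
        e1, e2, e3]
      exact e0
    exact (ENNReal.toReal_eq_toReal_iff' (measure_ne_top _ _)
      (ENNReal.mul_ne_top (measure_ne_top _ _) (measure_ne_top _ _))).mp hr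
  -- the good set
  have hmain : ∀ᵐ ω ∂μ,
      κ (Z ω) = ((κ (Z ω)).fst).prod ((κ (Z ω)).snd)
      ∧ (κ (Z ω)).snd (Iic τ) < 1
      ∧ (∀ t : ℝ, Gm t (Z ω) = (((κ (Z ω)).snd) (Iio t)).toReal)
      ∧ G τ (Z ω) = (((κ (Z ω)).snd) (Iic τ)).toReal := by
    have hA : ∀ᵐ ω ∂μ, ∀ q : ℚ, G (q : ℝ) (Z ω) = (κ (Z ω) (univ ×ˢ Iic (q : ℝ))).toReal :=
      ae_all_iff.2 hι
    have hB : ∀ᵐ ω ∂μ, ∀ q r : ℚ, κ (Z ω) (Iio (q : ℝ) ×ˢ Iio (r : ℝ))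
        = κ (Z ω) (Iio (q : ℝ) ×ˢ univ) * κ (Z ω) (univ ×ˢ Iio (r : ℝ)) :=
      ae_all_iff.2 fun q => ae_all_iff.2 (hfact q)
    filter_upwards [hA, hB, hτ1, hGτ] with ω e1 e2 e3 e4
    have hprod : κ (Z ω) = ((κ (Z ω)).fst).prod ((κ (Z ω)).snd) :=
      ipcw_prod_fact _ (fun q r => e2 q r)
    have hsndτ : G τ (Z ω) = ((κ (Z ω)).snd (Iic τ)).toReal := by
      rw [e3, ipcw_snd_apply _ measurableSet_Iic]
    have hlt : (κ (Z ω)).snd (Iic τ) < 1 := by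
      refine lt_of_le_of_ne prob_le_one ?_
      intro hcontr
      rw [hcontr, ENNReal.toReal_one] at hsndτ
      exact absurd hsndτ (ne_of_lt e4)
    have hGmω : ∀ t : ℝ, Gm t (Z ω) = ((κ (Z ω)).snd (Iio t)).toReal := by
      intro t
      obtain ⟨q, hmono, hqlt, hqt, hU⟩ := ipcw_rat_seq t
      have h1 : Tendsto (fun n => G ((q n : ℝ)) (Z ω)) atTop (nhds (Gm t (Z ω))) :=
        (hGm t (Z ω)).comp (tendsto_nhdsWithin_of_tendsto_nhds_of_eventually_within _ hqt
          (Eventually.of_forall fun n => hqlt n))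
      have hmono' : Monotone fun n => Iic ((q n : ℝ)) :=
        fun i j hij => Iic_subset_Iic.2 (hmono.monotone hij)
      have h2 : Tendsto (fun n => (κ (Z ω)).snd (Iic ((q n : ℝ)))) atTop
          (nhds ((κ (Z ω)).snd (Iio t))) := by
        have h := tendsto_measure_iUnion_atTop (μ := (κ (Z ω)).snd) hmono'
        rwa [hU] at h
      have h3 : Tendsto (fun n => ((κ (Z ω)).snd (Iic ((q n : ℝ)))).toReal) atTop
          (nhds (((κ (Z ω)).snd (Iio t)).toReal)) :=
        (ENNReal.tendsto_toReal (measure_ne_top _ _)).comp h2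
      have h4 : (fun n => ((κ (Z ω)).snd (Iic ((q n : ℝ)))).toReal)
          = fun n => G ((q n : ℝ)) (Z ω) := by
        funext n
        rw [← ipcw_snd_apply _ measurableSet_Iic, ← e1 (q n)]
      rw [h4] at h3
      exact tendsto_nhds_unique h1 h3
    exact ⟨hprod, hlt, hGmω, hsndτ⟩
  -- the canonical ENNReal-valued weight
  set Fe : (Fin d → ℝ) × (ℝ × ℝ) → ℝ≥0∞ := fun x =>
    (if x.2.1 ≤ x.2.2 ∧ x.2.1 ≤ τ then (1 - κ x.1 (univ ×ˢ Iio x.2.1))⁻¹ else 0)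
    + (if τ < x.2.1 ∧ τ < x.2.2 then (1 - κ x.1 (univ ×ˢ Iic τ))⁻¹ else 0) with hFedef
  have hFe_meas : Measurable Fe := by
    refine Measurable.add ?_ ?_
    · refine Measurable.ite ?_ ?_ measurable_const
      · exact (measurableSet_le (measurable_fst.comp measurable_snd)
          (measurable_snd.comp measurable_snd)).inter
          ((measurable_fst.comp measurable_snd) measurableSet_Iic)
      · refine Measurable.inv (Measurable.sub measurable_const ?_)
        exact (ipcw_meas_Iio κ).comp
          (measurable_fst.prodMk (measurable_fst.comp measurable_snd))
    · refine Measurable.ite ?_ ?_ measurable_const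
      · exact ((measurable_fst.comp measurable_snd) measurableSet_Ioi).inter
          ((measurable_snd.comp measurable_snd) measurableSet_Ioi)
      · exact Measurable.inv (Measurable.sub measurable_const
          ((κ.measurable_coe (MeasurableSet.univ.prod measurableSet_Iic)).comp measurable_fst))
  haveI : IsProbabilityMeasure (μ.map (fun ω => (Z ω, W ω))) :=
    Measure.isProbabilityMeasure_map (hZ.prodMk hWm).aemeasurable
  have hmap : μ.map (fun ω => (Z ω, W ω)) = (μ.map Z) ⊗ₘ κ := by
    have h := Measure.disintegrate (μ.map (fun ω => (Z ω, W ω))) (μ.map (fun ω => (Z ω, W ω))).condKernel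
    rw [hκdef, condDistrib_def]
    conv_lhs => rw [← h]
    congr 1
    exact Measure.fst_map_prodMk hWm
  have hinner_meas : Measurable fun z => ∫⁻ p, Fe (z, p) ∂(κ z) :=
    Measurable.lintegral_kernel_prod_right (f := fun z p => Fe (z, p)) hFe_meas
  have hchain : ∫⁻ ω, Fe (Z ω, W ω) ∂μ = ∫⁻ ω, (∫⁻ p, Fe ((Z ω), p) ∂(κ (Z ω))) ∂μ := by
    have h1 : ∫⁻ ω, Fe (Z ω, W ω) ∂μ = ∫⁻ x, Fe x ∂(μ.map (fun ω => (Z ω, W ω))) :=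
      (lintegral_map hFe_meas (hZ.prodMk hWm)).symm
    rw [h1, hmap, Measure.lintegral_compProd hFe_meas, lintegral_map hinner_meas hZ]
  have hinner1 : ∀ᵐ ω ∂μ, (∫⁻ p, Fe ((Z ω), p) ∂(κ (Z ω))) = 1 := by
    filter_upwards [hmain] with ω hω
    obtain ⟨hprod, hlt, hGmω, hτω⟩ := hω
    have hpt : ∀ p : ℝ × ℝ, Fe (Z ω, p)
        = ((if p.1 ≤ p.2 ∧ p.1 ≤ τ then (1 - (κ (Z ω)).snd (Iio p.1))⁻¹ else 0)
          + (if τ < p.1 ∧ τ < p.2 then (1 - (κ (Z ω)).snd (Iic τ))⁻¹ else 0)) := by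
      intro p
      simp only [hFedef]
      rw [ipcw_snd_apply _ measurableSet_Iio, ipcw_snd_apply _ measurableSet_Iic]
    have hmeasβ : Measurable fun t : ℝ => (κ (Z ω)).snd (Iio t) := by
      have h : (fun t : ℝ => (κ (Z ω)).snd (Iio t))
          = fun t => κ (Z ω) (univ ×ˢ Iio t) :=
        funext fun t => (ipcw_snd_apply _ measurableSet_Iio).symm
      rw [h]
      exact (ipcw_meas_Iio κ).comp (measurable_const.prodMk measurable_id)
    calc ∫⁻ p, Fe (Z ω, p) ∂(κ (Z ω))
        = ∫⁻ p : ℝ × ℝ, ((if p.1 ≤ p.2 ∧ p.1 ≤ τ then (1 - (κ (Z ω)).snd (Iio p.1))⁻¹ else 0)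
          + (if τ < p.1 ∧ τ < p.2 then (1 - (κ (Z ω)).snd (Iic τ))⁻¹ else 0))
          ∂(κ (Z ω)) := lintegral_congr hpt
      _ = ∫⁻ p : ℝ × ℝ, ((if p.1 ≤ p.2 ∧ p.1 ≤ τ then (1 - (κ (Z ω)).snd (Iio p.1))⁻¹ else 0)
          + (if τ < p.1 ∧ τ < p.2 then (1 - (κ (Z ω)).snd (Iic τ))⁻¹ else 0))
          ∂(((κ (Z ω)).fst).prod ((κ (Z ω)).snd)) := by rw [← hprod]
      _ = 1 := ipcw_lintegral τ _ _ hmeasβ hlt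
  have hkey : ∫⁻ ω, Fe (Z ω, W ω) ∂μ = 1 := by
    rw [hchain, lintegral_congr_ae hinner1, lintegral_one, measure_univ]
  -- pointwise identification
  have hptw : ∀ᵐ ω ∂μ,
      ((if min (Tstar ω) (C ω) ≤ τ then
          (if Tstar ω ≤ C ω then (1 : ℝ) else 0) /
            (1 - Gm (min (Tstar ω) (C ω)) (Z ω))
        else 0) +
        (if τ < min (Tstar ω) (C ω) then 1 / (1 - G τ (Z ω)) else 0))
        = (Fe (Z ω, W ω)).toReal ∧ Fe (Z ω, W ω) < ⊤ := by
    filter_upwards [hmain] with ω hω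
    obtain ⟨hprod, hlt, hGmω, hτω⟩ := hω
    have hFeω : Fe (Z ω, W ω)
        = ((if Tstar ω ≤ C ω ∧ Tstar ω ≤ τ then (1 - (κ (Z ω)).snd (Iio (Tstar ω)))⁻¹ else 0)
          + (if τ < Tstar ω ∧ τ < C ω then (1 - (κ (Z ω)).snd (Iic τ))⁻¹ else 0)) := by
      simp only [hFedef, hWdef]
      rw [ipcw_snd_apply _ measurableSet_Iio, ipcw_snd_apply _ measurableSet_Iic]
    have h0τ : (1 : ℝ≥0∞) - (κ (Z ω)).snd (Iic τ) ≠ 0 := by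
      rw [Ne, tsub_eq_zero_iff_le]
      exact not_le.2 hlt
    rcases le_or_gt (Tstar ω) (C ω) with htc | htc
    · have hmin : min (Tstar ω) (C ω) = Tstar ω := min_eq_left htc
      rcases le_or_gt (Tstar ω) τ with htτ | htτ
      · have hcond1 : Tstar ω ≤ C ω ∧ Tstar ω ≤ τ := ⟨htc, htτ⟩
        have hcond2 : ¬(τ < Tstar ω ∧ τ < C ω) := fun h => absurd htτ (not_le.2 h.1)
        have hβlt : (κ (Z ω)).snd (Iio (Tstar ω)) < 1 :=
          lt_of_le_of_lt (measure_mono fun x hx => le_trans (le_of_lt hx) htτ) hlt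
        have h0 : (1 : ℝ≥0∞) - (κ (Z ω)).snd (Iio (Tstar ω)) ≠ 0 := by
          rw [Ne, tsub_eq_zero_iff_le]
          exact not_le.2 hβlt
        constructor
        · rw [hFeω, if_pos hcond1, if_neg hcond2, add_zero, hmin, if_pos htτ,
            if_pos htc, if_neg (not_lt.2 htτ), add_zero, ENNReal.toReal_inv,
            ENNReal.toReal_sub_of_le prob_le_one ENNReal.one_ne_top, ENNReal.toReal_one,
            hGmω (Tstar ω), one_div]
        · rw [hFeω, if_pos hcond1, if_neg hcond2, add_zero]
          exact ENNReal.inv_lt_top.2 (pos_iff_ne_zero.2 h0)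
      · have hcond1 : ¬(Tstar ω ≤ C ω ∧ Tstar ω ≤ τ) := fun h => absurd h.2 (not_le.2 htτ)
        have hcond2 : τ < Tstar ω ∧ τ < C ω := ⟨htτ, lt_of_lt_of_le htτ htc⟩
        constructor
        · rw [hFeω, if_neg hcond1, if_pos hcond2, zero_add, hmin,
            if_neg (not_le.2 htτ), if_pos htτ, zero_add, ENNReal.toReal_inv,
            ENNReal.toReal_sub_of_le prob_le_one ENNReal.one_ne_top, ENNReal.toReal_one,
            hτω, one_div]
        · rw [hFeω, if_neg hcond1, if_pos hcond2, zero_add]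
          exact ENNReal.inv_lt_top.2 (pos_iff_ne_zero.2 h0τ)
    · have hmin : min (Tstar ω) (C ω) = C ω := min_eq_right htc.le
      have hcond1 : ¬(Tstar ω ≤ C ω ∧ Tstar ω ≤ τ) := fun h => absurd h.1 (not_le.2 htc)
      rcases lt_or_ge τ (C ω) with hcτ | hcτ
      · have hcond2 : τ < Tstar ω ∧ τ < C ω := ⟨hcτ.trans htc, hcτ⟩
        constructor
        · rw [hFeω, if_neg hcond1, if_pos hcond2, zero_add, hmin,
            if_neg (not_le.2 htc), zero_div, ite_self, if_pos hcτ, zero_add,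
            ENNReal.toReal_inv, ENNReal.toReal_sub_of_le prob_le_one ENNReal.one_ne_top,
            ENNReal.toReal_one, hτω, one_div]
        · rw [hFeω, if_neg hcond1, if_pos hcond2, zero_add]
          exact ENNReal.inv_lt_top.2 (pos_iff_ne_zero.2 h0τ)
      · have hcond2 : ¬(τ < Tstar ω ∧ τ < C ω) := fun h => absurd h.2 (not_lt.2 hcτ)
        constructor
        · rw [hFeω, if_neg hcond1, if_neg hcond2, add_zero, hmin,
            if_neg (not_lt.2 hcτ), add_zero, if_neg (not_le.2 htc), zero_div, ite_self,
            ENNReal.toReal_zero]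
        · rw [hFeω, if_neg hcond1, if_neg hcond2, add_zero]
          exact ENNReal.zero_lt_top 
  have hmeasFe : AEMeasurable (fun ω => Fe (Z ω, W ω)) μ :=
    (hFe_meas.comp (hZ.prodMk hWm)).aemeasurable
  calc (∫ ω, ((if min (Tstar ω) (C ω) ≤ τ then
            (if Tstar ω ≤ C ω then (1 : ℝ) else 0) /
              (1 - Gm (min (Tstar ω) (C ω)) (Z ω))
          else 0) +
          (if τ < min (Tstar ω) (C ω) then 1 / (1 - G τ (Z ω)) else 0)) ∂μ)
      = ∫ ω, (Fe (Z ω, W ω)).toReal ∂μ := integral_congr_ae (hptw.mono fun ω h => h.1)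
    _ = (∫⁻ ω, Fe (Z ω, W ω) ∂μ).toReal :=
        integral_toReal hmeasFe (hptw.mono fun ω h => h.2)
    _ = 1 := by rw [hkey]; exact ENNReal.toReal_one
end
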